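/- Let m ∈ V^± and let 𝒫₁, …, 𝒫ₖ be distinct pairwise compatible ΓW-partitions based at m, with Pᵢ the side of 𝒫ᵢ containing m. Then the images of φ(P₁,m), …, φ(Pₖ,m) in Out(A_Γ) generate a free abelian subgroup of rank k: they pairwise commute as outer automorphisms, and for any integers n₁, …, nₖ, if the composition φ(P₁,m)^{n₁} ∘ ⋯ ∘ φ(Pₖ,m)^{nₖ} is an inner automorphism of A_Γ, then n₁ = ⋯ = nₖ = 0. -/

import Mathlib

namespace GW

variable {V : Type*}

/-- `V^±`: the set of generators and their inverses, identified with `V × Bool`;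
`(v, true)` is the generator `v` and `(v, false)` is `v⁻¹`. -/
abbrev Vpm (V : Type*) := V × Bool

/-- The inverse of an element of `V^±`. -/
def pinv (x : Vpm V) : Vpm V := (x.1, !x.2)

/-- The link of a vertex: the set of vertices adjacent to it. -/
def lk (Γ : SimpleGraph V) (v : V) : Set V := {w | Γ.Adj v w}

/-- The star of a vertex: its link together with the vertex itself. -/
def st (Γ : SimpleGraph V) (v : V) : Set V := lk Γ v ∪ {v}

/-- A vertex is principal if no vertex has strictly larger link. -/
def Principal (Γ : SimpleGraph V) (v : V) : Prop := ¬ ∃ w : V, lk Γ v ⊂ lk Γ w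

/-- The relation `u ∼ w`: `lk(u) ⊆ st(w)` and `lk(w) ⊆ st(u)`. -/
def Eqv (Γ : SimpleGraph V) (u w : V) : Prop :=
  lk Γ u ⊆ st Γ w ∧ lk Γ w ⊆ st Γ u

/-- For `S ⊆ V`, the set `S^± ⊆ V^±` of elements with underlying vertex in `S`. -/
def pm (S : Set V) : Set (Vpm V) := {x | x.1 ∈ S}

/-- `u` and `w` lie in the same connected component of `Γ − lk(m)`
(the induced subgraph on the complement of the link of `m`). -/
def SameComp (Γ : SimpleGraph V) (m u w : V) : Prop :=
  ∃ (hu : u ∈ (lk Γ m)ᶜ) (hw : w ∈ (lk Γ m)ᶜ),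
    (Γ.induce ((lk Γ m)ᶜ : Set V)).Reachable ⟨u, hu⟩ ⟨w, hw⟩

/-- The vertex set of the connected component of `u` in `Γ − lk(m)`. -/
def comp (Γ : SimpleGraph V) (m u : V) : Set V := {w | SameComp Γ m u w}

/-- `U ⊆ V^±` is `m`-inseparable if `U = {u}` or `U = {u⁻¹}` for a vertex `u` whose
component in `Γ − lk(m)` is the single vertex `u`, or `U = C^±` for a component `C`
of `Γ − lk(m)` with more than one vertex. -/
def Inseparable (Γ : SimpleGraph V) (m : Vpm V) (U : Set (Vpm V)) : Prop :=
  (∃ u : V, comp Γ m.1 u = {u} ∧ (U = {(u, true)} ∨ U = {(u, false)})) ∨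
  (∃ u : V, u ∈ (lk Γ m.1)ᶜ ∧ comp Γ m.1 u ≠ {u} ∧ U = pm (comp Γ m.1 u))

/-- A `ΓW`-subset based at `m`: a union of `m`-inseparable subsets containing `m`
but not `m⁻¹`. -/
def GWSubset (Γ : SimpleGraph V) (m : Vpm V) (P : Set (Vpm V)) : Prop :=
  m ∈ P ∧ pinv m ∉ P ∧ ∀ x ∈ P, ∃ U : Set (Vpm V), Inseparable Γ m U ∧ x ∈ U ∧ U ⊆ P

/-- `P* = V^± ∖ lk(m)^± ∖ P`. -/
def pstar (Γ : SimpleGraph V) (m : Vpm V) (P : Set (Vpm V)) : Set (Vpm V) :=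
  (pm (lk Γ m.1))ᶜ \ P

/-- A `ΓW`-partition `{P | P* | lk(m)^±}` based at `m`, recorded together with its
base `m` and the side `P` containing `m`; both sides are `ΓW`-subsets with at least
two elements. -/
structure GWPartition (Γ : SimpleGraph V) where
  base : Vpm V
  P : Set (Vpm V)
  hP : GWSubset Γ base P
  hPstar : GWSubset Γ (pinv base) (pstar Γ base P)
  thickP : 2 ≤ P.ncard
  thickPstar : 2 ≤ (pstar Γ base P).ncard

/-- The side `P*` of a `ΓW`-partition. -/
def GWPartition.Pstar {Γ : SimpleGraph V} (Pa : GWPartition Γ) : Set (Vpm V) :=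
  pstar Γ Pa.base Pa.P

/-- The (unordered) pair of sides of a `ΓW`-partition; two `ΓW`-partitions are equal
as partitions exactly when they have the same sides. -/
def sidesOf {Γ : SimpleGraph V} (Pa : GWPartition Γ) : Set (Set (Vpm V)) :=
  {Pa.P, Pa.Pstar}

/-- A `ΓW`-partition splits a vertex `v` if `v` and `v⁻¹` lie in different sides. -/
def Splits {Γ : SimpleGraph V} (Pa : GWPartition Γ) (v : V) : Prop :=
  ((v, true) ∈ Pa.P ∧ (v, false) ∈ Pa.Pstar) ∨
  ((v, false) ∈ Pa.P ∧ (v, true) ∈ Pa.Pstar)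

/-- Compatibility of `ΓW`-partitions: some pair of sides is disjoint, or the
underlying vertices of the bases are adjacent with different stars. -/
def Compatible {Γ : SimpleGraph V} (Pa Qa : GWPartition Γ) : Prop :=
  (Pa.P ∩ Qa.P = ∅ ∨ Pa.P ∩ Qa.Pstar = ∅ ∨ Pa.Pstar ∩ Qa.P = ∅ ∨ Pa.Pstar ∩ Qa.Pstar = ∅) ∨
  (Γ.Adj Pa.base.1 Qa.base.1 ∧ st Γ Pa.base.1 ≠ st Γ Qa.base.1)

/-- Weak compatibility: some pair of sides is disjoint, or the underlying vertices of
the bases are adjacent (hence distinct). -/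
def WeakCompatible {Γ : SimpleGraph V} (Pa Qa : GWPartition Γ) : Prop :=
  (Pa.P ∩ Qa.P = ∅ ∨ Pa.P ∩ Qa.Pstar = ∅ ∨ Pa.Pstar ∩ Qa.P = ∅ ∨ Pa.Pstar ∩ Qa.Pstar = ∅) ∨
  Γ.Adj Pa.base.1 Qa.base.1

/-- A `ΓW`-partition is based at the vertex `u` if it is based at `u` or `u⁻¹`, i.e.
`lk(u)` equals the link of the recorded base and the partition separates `u` from
`u⁻¹`. -/
def BasedAtVtx {Γ : SimpleGraph V} (Pa : GWPartition Γ) (u : V) : Prop :=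
  lk Γ u = lk Γ Pa.base.1 ∧ Splits Pa u

/-- `M(U)`: the largest size of a collection of pairwise distinct, pairwise compatible
`ΓW`-partitions, each based at some element of `U`. -/
noncomputable def M (Γ : SimpleGraph V) (U : Set V) : ℕ :=
  sSup {k : ℕ | ∃ C : Finset (GWPartition Γ), C.card = k ∧
    (∀ Pa ∈ C, Pa.base.1 ∈ U) ∧
    (∀ Pa ∈ C, ∀ Qa ∈ C, Pa ≠ Qa → sidesOf Pa ≠ sidesOf Qa ∧ Compatible Pa Qa)}

/-- `μ(U)`: the largest size of a collection of pairwise distinct, pairwise weakly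
compatible `ΓW`-partitions, each based at some element of `U`. -/
noncomputable def Mweak (Γ : SimpleGraph V) (U : Set V) : ℕ :=
  sSup {k : ℕ | ∃ C : Finset (GWPartition Γ), C.card = k ∧
    (∀ Pa ∈ C, Pa.base.1 ∈ U) ∧
    (∀ Pa ∈ C, ∀ Qa ∈ C, Pa ≠ Qa → sidesOf Pa ≠ sidesOf Qa ∧ WeakCompatible Pa Qa)}

/-- The commutation relations defining the right-angled Artin group `A_Γ`. -/
def Rels (Γ : SimpleGraph V) : Set (FreeGroup V) :=
  {r | ∃ u w : V, Γ.Adj u w ∧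
    r = FreeGroup.of u * FreeGroup.of w * (FreeGroup.of u)⁻¹ * (FreeGroup.of w)⁻¹}

/-- The right-angled Artin group `A_Γ`. -/
abbrev RAAG (Γ : SimpleGraph V) := PresentedGroup (Rels Γ)

/-- The generator of `A_Γ` corresponding to a vertex. -/
def ofv (Γ : SimpleGraph V) (v : V) : RAAG Γ := PresentedGroup.of v

/-- The element of `A_Γ` corresponding to an element of `V^±`. -/
def gen (Γ : SimpleGraph V) (x : Vpm V) : RAAG Γ :=
  if x.2 then ofv Γ x.1 else (ofv Γ x.1)⁻¹

open scoped Classical in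
/-- The image of the generator `v` under the Whitehead automorphism `φ(P, m)`. -/
noncomputable def whImage (Γ : SimpleGraph V) (P : Set (Vpm V)) (m : Vpm V) (v : V) :
    RAAG Γ :=
  if (v, true) ∈ P ∧ (v, false) ∈ P then gen Γ m * ofv Γ v * (gen Γ m)⁻¹
  else if v ≠ m.1 ∧ (v, true) ∈ P ∧ (v, false) ∈ pstar Γ m P then ofv Γ v * (gen Γ m)⁻¹
  else if v ≠ m.1 ∧ (v, false) ∈ P ∧ (v, true) ∈ pstar Γ m P then gen Γ m * ofv Γ v
  else ofv Γ v

/-- `φ` is the Whitehead automorphism `φ(P, m)`: it sends each generator `v` to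
`mvm⁻¹` if `v, v⁻¹ ∈ P`; to `vm⁻¹` if `v ∈ P`, `v⁻¹ ∈ P*`, `v ≠ m^{±1}`; to `mv` if
`v⁻¹ ∈ P`, `v ∈ P*`, `v ≠ m^{±1}`; and to `v` otherwise. -/
def IsWhitehead (Γ : SimpleGraph V) (P : Set (Vpm V)) (m : Vpm V)
    (φ : MulAut (RAAG Γ)) : Prop :=
  ∀ v : V, φ (ofv Γ v) = whImage Γ P m v

/-- An automorphism is inner if it is conjugation by some group element. -/
def IsInner {G : Type*} [Group G] (φ : MulAut G) : Prop :=
  ∃ g : G, ∀ x, φ x = g * x * g⁻¹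

/-- Two automorphisms commute as outer automorphisms iff their commutator is inner. -/
def CommuteOuter {G : Type*} [Group G] (φ ψ : MulAut G) : Prop :=
  IsInner (φ * ψ * φ⁻¹ * ψ⁻¹)

/-- The subgroup of inner automorphisms. -/
def Inn (G : Type*) [Group G] : Subgroup (MulAut G) := (MulAut.conj : G →* MulAut G).range

instance innNormal (G : Type*) [Group G] : (Inn G).Normal := by
  constructor
  intro n hn φ
  obtain ⟨g, rfl⟩ := hn
  refine ⟨φ g, ?_⟩
  ext x
  simp [MulAut.conj, mul_assoc]

/-- The outer automorphism group `Out(G) = Aut(G)/Inn(G)`. -/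
abbrev Out (G : Type*) [Group G] := MulAut G ⧸ Inn G

/-- The projection `Aut(G) → Out(G)`. -/
def toOut (G : Type*) [Group G] : MulAut G →* Out G := QuotientGroup.mk' (Inn G)


/-! ### Auxiliary machinery for `stmt6` -/

open scoped Classical

/-- Affine group over ℚ: pairs `(c,q)` acting as `z ↦ cz + q`. -/
@[ext] structure Aff where
  c : ℚˣ
  q : ℚ

namespace Aff

instance : Mul Aff := ⟨fun a b => ⟨a.c * b.c, a.q + (a.c : ℚ) * b.q⟩⟩
instance : One Aff := ⟨⟨1, 0⟩⟩
instance : Inv Aff := ⟨fun a => ⟨a.c⁻¹, -((a.c⁻¹ : ℚ) * a.q)⟩⟩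

lemma mul_def (a b : Aff) : a * b = ⟨a.c * b.c, a.q + (a.c : ℚ) * b.q⟩ := rfl
lemma one_def : (1 : Aff) = ⟨1, 0⟩ := rfl
lemma inv_def (a : Aff) : a⁻¹ = ⟨a.c⁻¹, -((a.c⁻¹ : ℚ) * a.q)⟩ := rfl

instance : Group Aff where
  mul_assoc a b d := by
    simp only [mul_def]
    ext <;> simp <;> ring
  one_mul a := by simp [mul_def, one_def]
  mul_one a := by simp [mul_def, one_def]
  inv_mul_cancel a := by
    simp only [mul_def, inv_def, one_def]
    ext <;> simp

/-- The scaling-part homomorphism. -/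
def cHom : Aff →* ℚˣ where
  toFun := Aff.c
  map_one' := rfl
  map_mul' _ _ := rfl

/-- Embedding scalings. -/
def scale : ℚˣ →* Aff where
  toFun c := ⟨c, 0⟩
  map_one' := rfl
  map_mul' a b := by simp [mul_def]

def twoU : ℚˣ := Units.mk0 2 two_ne_zero

def t : Aff := ⟨twoU, 0⟩
def y : Aff := ⟨1, 1⟩

lemma t_zpow (s : ℤ) : t ^ s = ⟨twoU ^ s, 0⟩ := by
  have : t = scale twoU := rfl
  rw [this, ← map_zpow]; rfl

lemma sandwich (s1 s2 : ℤ) : t ^ s1 * y * t ^ (-s2) = ⟨twoU ^ (s1 - s2), (2:ℚ) ^ s1⟩ := by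
  rw [t_zpow, t_zpow]
  simp only [mul_def, y]
  ext
  · simp [sub_eq_add_neg, zpow_add, zpow_neg]
  · simp [Units.val_zpow_eq_zpow_val, twoU]

lemma q_eq_zero_of_commute_t {h : Aff} (hc : h * t = t * h) : h.q = 0 := by
  have h1 := congrArg Aff.q hc
  simp [mul_def, t] at h1
  have h2 : ((twoU : ℚ)) = 2 := rfl
  rw [h2] at h1
  linarith

lemma conj_y {h : Aff} (hq : h.q = 0) : h * y * h⁻¹ = ⟨1, (h.c : ℚ)⟩ := by
  simp only [mul_def, inv_def, y, hq]
  ext <;> simp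

lemma two_zpow_inj {a b : ℤ} (h : (2:ℚ) ^ a = (2:ℚ) ^ b) : a = b :=
  zpow_right_injective₀ (by norm_num) (by norm_num) h

lemma twoU_zpow_inj {a b : ℤ} (h : twoU ^ a = twoU ^ b) : a = b := by
  apply two_zpow_inj
  have h2 := congrArg (Units.val) h
  simpa [Units.val_zpow_eq_zpow_val, twoU] using h2

end Aff

section GoodSec

variable {Γ : SimpleGraph V} {m : Vpm V}

lemma gwsubset_not_lk {P : Set (Vpm V)} (h : GWSubset Γ m P) :
    ∀ x ∈ P, x.1 ∉ lk Γ m.1 := by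
  intro x hx
  obtain ⟨U, hU, hxU, -⟩ := h.2.2 x hx
  rcases hU with ⟨u, hcomp, hU⟩ | ⟨u, hu, -, hU⟩
  · have hucomp : u ∈ comp Γ m.1 u := by rw [hcomp]; exact rfl
    obtain ⟨h1, -, -⟩ := hucomp
    rcases hU with rfl | rfl <;>
      · rw [Set.mem_singleton_iff] at hxU; subst hxU; exact h1
  · rw [hU] at hxU
    obtain ⟨-, hw, -⟩ := hxU
    exact hw

/-- `ψ` acts on each generator `v` as `m^{α v} v m^{-β v}`, with trivial exponents at
the base vertex. -/
def Good (Γ : SimpleGraph V) (m : Vpm V) (ψ : MulAut (RAAG Γ)) (α β : V → ℤ) : Prop :=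
  α m.1 = 0 ∧ β m.1 = 0 ∧
    ∀ v, ψ (ofv Γ v) = gen Γ m ^ α v * ofv Γ v * gen Γ m ^ (-β v)

namespace Good

lemma of_eq {ψ α β α' β'} (h : Good Γ m ψ α β) (hα : ∀ v, α v = α' v)
    (hβ : ∀ v, β v = β' v) : Good Γ m ψ α' β' :=
  ⟨(hα m.1) ▸ h.1, (hβ m.1) ▸ h.2.1, fun v => by rw [← hα v, ← hβ v]; exact h.2.2 v⟩

lemma map_ofm {ψ α β} (h : Good Γ m ψ α β) : ψ (ofv Γ m.1) = ofv Γ m.1 := by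
  have h2 := h.2.2 m.1
  rw [h.1, h.2.1] at h2
  simpa using h2

lemma map_gen {ψ α β} (h : Good Γ m ψ α β) : ψ (gen Γ m) = gen Γ m := by
  cases hb : m.2 <;> simp [gen, hb, map_inv, h.map_ofm]

lemma one : Good Γ m 1 0 0 :=
  ⟨rfl, rfl, fun v => by simp⟩

lemma mul {ψ ψ' α β α' β'} (h : Good Γ m ψ α β) (h' : Good Γ m ψ' α' β') :
    Good Γ m (ψ * ψ') (α + α') (β + β') := by
  refine ⟨by simp [h.1, h'.1], by simp [h.2.1, h'.2.1], fun v => ?_⟩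
  rw [MulAut.mul_apply, h'.2.2 v, map_mul, map_mul, map_zpow, map_zpow, h.map_gen, h.2.2 v]
  simp only [Pi.add_apply]
  rw [neg_add, zpow_add, zpow_add]
  group

lemma inv {ψ α β} (h : Good Γ m ψ α β) : Good Γ m ψ⁻¹ (-α) (-β) := by
  refine ⟨by simp [h.1], by simp [h.2.1], fun v => ?_⟩
  apply ψ.injective
  rw [show ψ (ψ⁻¹ (ofv Γ v)) = ofv Γ v from by
    rw [MulAut.inv_def]; exact ψ.apply_symm_apply _]
  rw [map_mul, map_mul, map_zpow, map_zpow, h.map_gen, h.2.2 v]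
  simp only [Pi.neg_apply]
  group

lemma zpow {ψ α β} (h : Good Γ m ψ α β) (n : ℤ) :
    Good Γ m (ψ ^ n) (fun v => n * α v) (fun v => n * β v) := by
  induction n using Int.induction_on with
  | zero => exact Good.one.of_eq (fun v => by simp) (fun v => by simp)
  | succ i ih =>
      rw [show ((i:ℤ) + 1) = (i:ℤ) + 1 from rfl, zpow_add_one]
      exact (ih.mul h).of_eq (fun v => by simp; ring) (fun v => by simp; ring)
  | pred i ih =>
      rw [show (-(i:ℤ) - 1) = (-(i:ℤ)) - 1 from rfl, zpow_sub_one]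
      exact (ih.mul h.inv).of_eq (fun v => by simp; ring) (fun v => by simp; ring)

lemma listProd {k : ℕ} (φ : Fin k → MulAut (RAAG Γ)) (α β : Fin k → V → ℤ)
    (h : ∀ i, Good Γ m (φ i) (α i) (β i)) :
    Good Γ m (List.ofFn φ).prod (fun v => ∑ i, α i v) (fun v => ∑ i, β i v) := by
  induction k with
  | zero => exact Good.one.of_eq (fun v => by simp) (fun v => by simp)
  | succ k ih =>
      rw [List.ofFn_succ, List.prod_cons]
      exact ((h 0).mul (ih _ _ _ (fun i => h i.succ))).of_eq
        (fun v => by rw [Fin.sum_univ_succ]; rfl)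
        (fun v => by rw [Fin.sum_univ_succ]; rfl)

end Good

lemma good_whitehead {P : Set (Vpm V)} (hP : GWSubset Γ m P) {φ : MulAut (RAAG Γ)}
    (hφ : IsWhitehead Γ P m φ) :
    Good Γ m φ (fun v => if v = m.1 then 0 else if (v, false) ∈ P then 1 else 0)
               (fun v => if v = m.1 then 0 else if (v, true) ∈ P then 1 else 0) := by
  refine ⟨by simp, by simp, fun v => ?_⟩
  rw [hφ v]
  by_cases hvm : v = m.1
  · subst hvm
    have hpinv := hP.2.1
    have h1 : ¬((m.1, true) ∈ P ∧ (m.1, false) ∈ P) := by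
      rintro ⟨ht, hf⟩
      cases hb : m.2
      · exact hpinv (by simpa [pinv, hb] using ht)
      · exact hpinv (by simpa [pinv, hb] using hf)
    simp [whImage, h1]
  · have hsub := gwsubset_not_lk hP
    by_cases hT : (v, true) ∈ P <;> by_cases hF : (v, false) ∈ P
    · have h2 : ¬(v ≠ m.1 ∧ (v, true) ∈ P ∧ (v, false) ∈ pstar Γ m P) := by
        rintro ⟨-, -, hFs⟩; exact hFs.2 hF
      simp [whImage, hT, hF, hvm, zpow_one, zpow_neg]
    · have hvlk : v ∉ lk Γ m.1 := hsub _ hT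
      have hFs : (v, false) ∈ pstar Γ m P := ⟨hvlk, hF⟩
      simp [whImage, hT, hF, hFs, hvm, zpow_one, zpow_neg]
    · have hvlk : v ∉ lk Γ m.1 := hsub _ hF
      have hTs : (v, true) ∈ pstar Γ m P := ⟨hvlk, hT⟩
      simp [whImage, hT, hF, hTs, hvm, zpow_one, zpow_neg]
    · simp [whImage, hT, hF, hvm]

lemma good_comm {ψ ψ' : MulAut (RAAG Γ)} {α β α' β' : V → ℤ}
    (h : Good Γ m ψ α β) (h' : Good Γ m ψ' α' β') : ψ * ψ' = ψ' * ψ := by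
  have g1 := h.mul h'
  have g2 := h'.mul h
  apply MulEquiv.toMonoidHom_injective
  apply PresentedGroup.ext
  intro x
  show (ψ * ψ') (ofv Γ x) = (ψ' * ψ) (ofv Γ x)
  rw [g1.2.2 x, g2.2.2 x]
  simp only [Pi.add_apply]
  rw [add_comm (α x) (α' x), add_comm (β x) (β' x)]

end GoodSec

section KeySec

variable {Γ : SimpleGraph V} {m : Vpm V}

/-- The sign of the base element. -/
def eps (m : Vpm V) : ℤ := if m.2 then 1 else -1

lemma eps_mul_cancel {a b : ℤ} (m : Vpm V) (h : eps m * a = eps m * b) : a = b := by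
  cases hb : m.2 <;> simp [eps, hb] at h <;> omega

/-- The homomorphism counting the (signed) number of occurrences of the base
generator, valued in powers of two. -/
noncomputable def chi (Γ : SimpleGraph V) (m : Vpm V) : RAAG Γ →* ℚˣ :=
  PresentedGroup.toGroup (f := fun u => if u = m.1 then Aff.twoU else 1)
    (by
      rintro r ⟨u, w, -, rfl⟩
      simp only [map_mul, map_inv, FreeGroup.lift_apply_of]
      rw [mul_comm (if u = m.1 then Aff.twoU else 1) (if w = m.1 then Aff.twoU else 1)]
      group)

lemma chi_of (u : V) : chi Γ m (ofv Γ u) = if u = m.1 then Aff.twoU else 1 :=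
  PresentedGroup.toGroup.of _

lemma key1 (Ψ : MulAut (RAAG Γ)) (A B : V → ℤ) (hA : A m.1 = 0) (hB : B m.1 = 0)
    (hΨ : ∀ u, Ψ (ofv Γ u) = gen Γ m ^ A u * ofv Γ u * gen Γ m ^ (-B u))
    (g : RAAG Γ) (hg : ∀ x, Ψ x = g * x * g⁻¹)
    (v : V) (hvlk : v ∉ lk Γ m.1) (hvm : v ≠ m.1) :
    A v = B v ∧ (2:ℚ) ^ (eps m * A v) = ((chi Γ m g : ℚˣ) : ℚ) := by
  classical
  set f : V → Aff := fun u => if u = m.1 then Aff.t else if u = v then Aff.y else 1 with hf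
  have hcomm : ∀ p q : V, Γ.Adj p q → f p * f q = f q * f p := by
    intro p q hadj
    by_cases hp1 : p = m.1
    · by_cases hq1 : q = m.1
      · rw [hp1, hq1]
      · by_cases hq2 : q = v
        · exact absurd (hp1 ▸ hq2 ▸ hadj) hvlk
        · simp [hf, hq1, hq2]
    · by_cases hp2 : p = v
      · by_cases hq1 : q = m.1
        · exact absurd (Γ.adj_symm (hp2 ▸ hq1 ▸ hadj)) hvlk
        · by_cases hq2 : q = v
          · rw [hp2, hq2]
          · simp [hf, hq1, hq2]
      · simp [hf, hp1, hp2]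
  have hrels : ∀ r ∈ Rels Γ, FreeGroup.lift f r = 1 := by
    rintro r ⟨u, w, hadj, rfl⟩
    simp only [map_mul, map_inv, FreeGroup.lift_apply_of]
    rw [hcomm u w hadj]
    group
  set ρ : RAAG Γ →* Aff := PresentedGroup.toGroup hrels with hρ
  have hρof : ∀ u, ρ (ofv Γ u) = f u := fun u => PresentedGroup.toGroup.of hrels
  have hρm : ρ (ofv Γ m.1) = Aff.t := by rw [hρof]; simp [hf]
  have hρv : ρ (ofv Γ v) = Aff.y := by rw [hρof]; simp [hf, hvm]
  have hρgen : ρ (gen Γ m) = Aff.t ^ eps m := by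
    cases hb : m.2 <;> simp [gen, hb, eps, map_inv, hρm]
  have hΨm : Ψ (ofv Γ m.1) = ofv Γ m.1 := by rw [hΨ]; simp [hA, hB]
  have hq0 : (ρ g).q = 0 := by
    apply Aff.q_eq_zero_of_commute_t
    have h1 : g * ofv Γ m.1 * g⁻¹ = ofv Γ m.1 := by rw [← hg]; exact hΨm
    have h2 := congrArg ρ h1
    simp only [map_mul, map_inv, hρm] at h2
    calc ρ g * Aff.t = ρ g * Aff.t * (ρ g)⁻¹ * ρ g := by group
    _ = Aff.t * ρ g := by rw [h2]
  have hmain : (⟨1, ((ρ g).c : ℚ)⟩ : Aff) =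
      ⟨Aff.twoU ^ (eps m * A v - eps m * B v), (2:ℚ) ^ (eps m * A v)⟩ := by
    have h1 := congrArg ρ (hΨ v)
    rw [hg] at h1
    simp only [map_mul, map_inv, map_zpow, hρgen, hρv] at h1
    rw [← zpow_mul, ← zpow_mul] at h1
    rw [Aff.conj_y hq0] at h1
    rw [h1, show eps m * (-B v) = -(eps m * B v) by ring, Aff.sandwich]
  have hc := congrArg Aff.c hmain
  have hq := congrArg Aff.q hmain
  simp only at hc hq
  have hc0 : Aff.twoU ^ (eps m * A v - eps m * B v) = Aff.twoU ^ (0:ℤ) := by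
    rw [← hc]; simp
  have hAB : A v = B v := by
    have h3 := Aff.twoU_zpow_inj hc0
    have h4 : eps m * A v = eps m * B v := by omega
    exact eps_mul_cancel m h4
  refine ⟨hAB, ?_⟩
  have hchi : Aff.cHom.comp ρ = chi Γ m := by
    apply PresentedGroup.ext
    intro x
    show Aff.cHom (ρ (ofv Γ x)) = chi Γ m (ofv Γ x)
    rw [hρof, chi_of]
    by_cases hx1 : x = m.1
    · simp only [hf, hx1, if_pos rfl]
      rfl
    · by_cases hx2 : x = v
      · simp only [hf, hx1, hx2, if_neg hvm, if_pos rfl, if_neg (show ¬v = m.1 from hvm)]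
        rfl
      · simp only [hf, if_neg hx1, if_neg hx2]
        rfl
  have hcg : (ρ g).c = chi Γ m g := by
    rw [← hchi]; rfl
  rw [← hcg, hq]

lemma key (Ψ : MulAut (RAAG Γ)) (A B : V → ℤ) (hA : A m.1 = 0) (hB : B m.1 = 0)
    (hΨ : ∀ u, Ψ (ofv Γ u) = gen Γ m ^ A u * ofv Γ u * gen Γ m ^ (-B u))
    (hInn : IsInner Ψ) :
    ∀ v, v ∉ lk Γ m.1 → v ≠ m.1 → ∀ w, w ∉ lk Γ m.1 → w ≠ m.1 →
      A v = B v ∧ A v = A w := by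
  obtain ⟨g, hg⟩ := hInn
  intro v hv1 hv2 w hw1 hw2
  obtain ⟨h1, h2⟩ := key1 Ψ A B hA hB hΨ g hg v hv1 hv2
  obtain ⟨h1', h2'⟩ := key1 Ψ A B hA hB hΨ g hg w hw1 hw2
  refine ⟨h1, ?_⟩
  exact eps_mul_cancel m (Aff.two_zpow_inj (h2.trans h2'.symm))

end KeySec

set_option maxHeartbeats 1600000 in
/-- Distinct pairwise compatible `ΓW`-partitions based at the same `m ∈ V^±` give
Whitehead automorphisms whose images in `Out(A_Γ)` generate a free abelian subgroup
of rank `k`: they pairwise commute as outer automorphisms, and any product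
`φ(P₁,m)^{n₁} ⋯ φ(Pₖ,m)^{nₖ}` that is inner has all exponents zero. -/
theorem stmt6 {V : Type*} [Fintype V] (Γ : SimpleGraph V) (m : Vpm V) (k : ℕ)
    (Pa : Fin k → GWPartition Γ) (hbase : ∀ i, (Pa i).base = m)
    (hne : ∀ i j, i ≠ j → sidesOf (Pa i) ≠ sidesOf (Pa j))
    (hcomp : ∀ i j, i ≠ j → Compatible (Pa i) (Pa j))
    (φ : Fin k → MulAut (RAAG Γ))
    (hφ : ∀ i, IsWhitehead Γ (Pa i).P m (φ i)) :
    (∀ i j, CommuteOuter (φ i) (φ j)) ∧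
    (∀ n : Fin k → ℤ, IsInner (List.ofFn fun i => φ i ^ n i).prod → ∀ i, n i = 0) := by
  classical
  have hGood : ∀ i, Good Γ m (φ i)
      (fun v => if v = m.1 then 0 else if (v, false) ∈ (Pa i).P then 1 else 0)
      (fun v => if v = m.1 then 0 else if (v, true) ∈ (Pa i).P then 1 else 0) :=
    fun i => good_whitehead (hbase i ▸ (Pa i).hP) (hφ i)
  constructor
  · intro i j
    have hc : φ i * φ j = φ j * φ i := good_comm (hGood i) (hGood j)
    show IsInner (φ i * φ j * (φ i)⁻¹ * (φ j)⁻¹)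
    have he : φ i * φ j * (φ i)⁻¹ * (φ j)⁻¹ = 1 := by rw [hc]; group
    rw [he]
    exact ⟨1, fun x => by simp⟩
  · intro n hInn i0
    have hfin : ∀ s : Set (Vpm V), s.Finite := fun s => Set.toFinite s
    set Pset : Fin k → Set (Vpm V) := fun i => (Pa i).P with hPset
    have hmP : ∀ i, m ∈ Pset i := fun i => by
      have h := (Pa i).hP.1; rwa [hbase i] at h
    have hpinvP : ∀ i, pinv m ∉ Pset i := fun i => by
      have h := (Pa i).hP.2.1; rwa [hbase i] at h
    have hlkc : ∀ i, ∀ x ∈ Pset i, x.1 ∉ lk Γ m.1 :=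
      fun i => gwsubset_not_lk (hbase i ▸ (Pa i).hP)
    have hvm_of : ∀ (i : Fin k) (x : Vpm V), x ∈ Pset i → x.1 = m.1 → x = m := by
      intro i x hx hx1
      by_cases hb : x.2 = m.2
      · exact Prod.ext hx1 hb
      · exfalso
        apply hpinvP i
        have hpe : x = pinv m :=
          Prod.ext hx1 (by cases c1 : x.2 <;> cases c2 : m.2 <;> simp_all [pinv])
        rwa [← hpe]
    have hPinj : ∀ i j, Pset i = Pset j → i = j := by
      intro i j hij
      by_contra hne'
      refine hne i j hne' ?_
      show ({(Pa i).P, (Pa i).Pstar} : Set (Set (Vpm V))) = {(Pa j).P, (Pa j).Pstar}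
      unfold GWPartition.Pstar
      rw [hbase i, hbase j, show (Pa i).P = (Pa j).P from hij]
    have hpinvstar : ∀ i, pinv m ∈ (Pa i).Pstar := fun i => by
      have h := (Pa i).hPstar.1
      unfold GWPartition.Pstar
      rwa [hbase i] at h ⊢
    have hchain : ∀ i j, Pset i ⊆ Pset j ∨ Pset j ⊆ Pset i := by
      intro i j
      by_cases hij : i = j
      · left; rw [hij]
      have hstar_i : (Pa i).Pstar = pstar Γ m (Pset i) := by
        unfold GWPartition.Pstar; rw [hbase i]
      have hstar_j : (Pa j).Pstar = pstar Γ m (Pset j) := by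
        unfold GWPartition.Pstar; rw [hbase j]
      have hsub : ∀ a b : Fin k, Pset a ∩ pstar Γ m (Pset b) = ∅ → Pset a ⊆ Pset b := by
        intro a b hab x hx
        by_contra hxb
        have hmem : x ∈ Pset a ∩ pstar Γ m (Pset b) := ⟨hx, ⟨hlkc a x hx, hxb⟩⟩
        rw [hab] at hmem
        exact hmem
      rcases hcomp i j hij with (h | h | h | h) | ⟨hadj, -⟩
      · exact absurd (Set.eq_empty_iff_forall_notMem.1 h m) (by
          intro hcon
          exact hcon ⟨hmP i, hmP j⟩)
      · left; exact hsub i j (by rw [← hstar_j]; exact h)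
      · right
        refine hsub j i ?_
        rw [← hstar_i, Set.inter_comm]
        exact h
      · exact absurd (Set.eq_empty_iff_forall_notMem.1 h (pinv m)) (by
          intro hcon
          exact hcon ⟨hpinvstar i, hpinvstar j⟩)
      · rw [hbase i, hbase j] at hadj
        exact absurd hadj (Γ.irrefl)
    have hsubset_of_le : ∀ i j, (Pset i).ncard ≤ (Pset j).ncard → Pset i ⊆ Pset j := by
      intro i j hle
      rcases hchain i j with h | h
      · exact h
      · have he := Set.eq_of_subset_of_ncard_le h hle (hfin _)
        exact he.symm ▸ subset_rfl
    have hlt_of_ssub : ∀ i j, i ≠ j → Pset i ⊆ Pset j → (Pset i).ncard < (Pset j).ncard := by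
      intro i j hij hsubs
      refine Set.ncard_lt_ncard ?_ (hfin _)
      exact (Set.ssubset_iff_subset_ne).2 ⟨hsubs, fun he => hij (hPinj i j he)⟩
    -- the exponent bookkeeping
    set Af : V → ℤ :=
      fun v => ∑ i, n i * (if v = m.1 then 0 else if (v, false) ∈ Pset i then 1 else 0) with hAf
    set Bf : V → ℤ :=
      fun v => ∑ i, n i * (if v = m.1 then 0 else if (v, true) ∈ Pset i then 1 else 0) with hBf
    set F : Vpm V → ℤ := fun x => ∑ i, if x ∈ Pset i then n i else 0 with hFdef
    have hGoodn : ∀ i, Good Γ m (φ i ^ n i)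
        (fun v => n i * (if v = m.1 then 0 else if (v, false) ∈ Pset i then 1 else 0))
        (fun v => n i * (if v = m.1 then 0 else if (v, true) ∈ Pset i then 1 else 0)) :=
      fun i => (hGood i).zpow (n i)
    have hGoodΦ : Good Γ m (List.ofFn fun i => φ i ^ n i).prod Af Bf := by
      simp only [hAf, hBf]
      exact Good.listProd _ _ _ hGoodn
    have hAm : Af m.1 = 0 := by simp [hAf]
    have hBm : Bf m.1 = 0 := by simp [hBf]
    have hkey := key _ Af Bf hAm hBm hGoodΦ.2.2 hInn
    have hlink : ∀ v, v ≠ m.1 → Af v = F (v, false) ∧ Bf v = F (v, true) := by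
      intro v hv
      simp only [hAf, hBf, hFdef]
      constructor
      · refine Finset.sum_congr rfl fun j _ => ?_
        rw [if_neg hv]
        by_cases h : ((v, false) : Vpm V) ∈ Pset j
        · rw [if_pos h, if_pos h, mul_one]
        · rw [if_neg h, if_neg h, mul_zero]
      · refine Finset.sum_congr rfl fun j _ => ?_
        rw [if_neg hv]
        by_cases h : ((v, true) : Vpm V) ∈ Pset j
        · rw [if_pos h, if_pos h, mul_one]
        · rw [if_neg h, if_neg h, mul_zero]
    have hFA : ∀ x : Vpm V, x.1 ∉ lk Γ m.1 → x.1 ≠ m.1 → F x = Af x.1 := by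
      intro x h1 h2
      obtain ⟨hAB, -⟩ := hkey x.1 h1 h2 x.1 h1 h2
      obtain ⟨hA1, hB1⟩ := hlink x.1 h2
      cases hxb : x.2
      · rw [show x = (x.1, false) from Prod.ext rfl hxb, hA1]
      · rw [show x = (x.1, true) from Prod.ext rfl hxb, hAB, hB1]
    -- a point outside every side
    obtain ⟨imax, -, hmax⟩ := Finset.exists_max_image Finset.univ
      (fun i => (Pset i).ncard) ⟨i0, Finset.mem_univ i0⟩
    have hstarcard : 1 < (pstar Γ m (Pset imax)).ncard := by
      have h := (Pa imax).thickPstar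
      rw [hbase imax] at h
      have h2 : (pstar Γ m (Pset imax)).ncard = (pstar Γ m (Pa imax).P).ncard := rfl
      omega
    obtain ⟨z, hzstar, hzne⟩ := Set.exists_ne_of_one_lt_ncard hstarcard (pinv m)
    obtain ⟨hzlk, hznP⟩ := hzstar
    have hzall : ∀ j, z ∉ Pset j :=
      fun j hzj => hznP (hsubset_of_le j imax (hmax j (Finset.mem_univ j)) hzj)
    have hzlk' : z.1 ∉ lk Γ m.1 := hzlk
    have hzm : z.1 ≠ m.1 := by
      intro h
      by_cases hb : z.2 = m.2
      · exact hznP (by rw [show z = m from Prod.ext h hb]; exact hmP imax)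
      · exact hzne (Prod.ext h (by cases c1 : z.2 <;> cases c2 : m.2 <;> simp_all [pinv]))
    have hFz : F z = 0 := Finset.sum_eq_zero fun j _ => if_neg (hzall j)
    have hF0 : ∀ x : Vpm V, x.1 ∉ lk Γ m.1 → x.1 ≠ m.1 → F x = 0 := by
      intro x h1 h2
      rw [hFA x h1 h2]
      obtain ⟨-, hAeq⟩ := hkey x.1 h1 h2 z.1 hzlk' hzm
      rw [hAeq, ← hFA z hzlk' hzm, hFz]
    -- witnesses separating the chain
    have hwit : ∀ i, ∃ x : Vpm V, x.1 ∉ lk Γ m.1 ∧ x.1 ≠ m.1 ∧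
        ∀ j, (x ∈ Pset j ↔ Pset i ⊆ Pset j) := by
      intro i
      have hximem : ∀ (x : Vpm V), x ∈ Pset i →
          (∀ j, (Pset j).ncard < (Pset i).ncard → x ∉ Pset j) →
          ∀ j, (x ∈ Pset j ↔ Pset i ⊆ Pset j) := by
        intro x hxi hnin j
        constructor
        · intro hxj
          by_cases hij : i = j
          · rw [hij]
          rcases hchain i j with h | h
          · exact h
          · exact absurd hxj (hnin j (hlt_of_ssub j i (Ne.symm hij) h))
        · intro hsub; exact hsub hxi
      by_cases hS : (Finset.univ.filter (fun j => (Pset j).ncard < (Pset i).ncard)).Nonempty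
      · obtain ⟨j0, hj0mem, hj0max⟩ := Finset.exists_max_image _ (fun j => (Pset j).ncard) hS
        have hj0lt : (Pset j0).ncard < (Pset i).ncard := (Finset.mem_filter.1 hj0mem).2
        have hnotsub : ¬ Pset i ⊆ Pset j0 := by
          intro hsubs
          have := Set.ncard_le_ncard hsubs (hfin _)
          omega
        obtain ⟨x, hxi, hxj0⟩ := Set.not_subset.1 hnotsub
        have hxm : x.1 ≠ m.1 := by
          intro h
          exact hxj0 (by rw [hvm_of i x hxi h]; exact hmP j0)
        refine ⟨x, hlkc i x hxi, hxm, hximem x hxi ?_⟩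
        intro j hjlt hxj
        have hjmem : j ∈ Finset.univ.filter (fun j => (Pset j).ncard < (Pset i).ncard) :=
          Finset.mem_filter.2 ⟨Finset.mem_univ _, hjlt⟩
        exact hxj0 (hsubset_of_le j j0 (hj0max j hjmem) hxj)
      · have hcard : 1 < (Pset i).ncard := by
          have h := (Pa i).thickP
          have h2 : (Pset i).ncard = (Pa i).P.ncard := rfl
          omega
        obtain ⟨x, hxi, hxne⟩ := Set.exists_ne_of_one_lt_ncard hcard m
        have hxm : x.1 ≠ m.1 := fun h => hxne (hvm_of i x hxi h)
        refine ⟨x, hlkc i x hxi, hxm, hximem x hxi ?_⟩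
        intro j hjlt
        exact absurd ⟨j, Finset.mem_filter.2 ⟨Finset.mem_univ _, hjlt⟩⟩ hS
    -- downward induction along the chain
    have main : ∀ N : ℕ, ∀ i,
        (Finset.univ.filter (fun l => (Pset i).ncard < (Pset l).ncard)).card < N → n i = 0 := by
      intro N
      induction N with
      | zero => intro i h; omega
      | succ N ih =>
        intro i hcard
        obtain ⟨x, hx1, hx2, hx3⟩ := hwit i
        have hFx := hF0 x hx1 hx2
        have hxi : x ∈ Pset i := (hx3 i).2 subset_rfl
        have hterm : ∀ j, (if x ∈ Pset j then n j else 0) = (if j = i then n i else 0) := by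
          intro j
          by_cases hj : j = i
          · subst hj
            rw [if_pos hxi, if_pos rfl]
          · rw [if_neg hj]
            by_cases hxj : x ∈ Pset j
            · rw [if_pos hxj]
              have hlt : (Pset i).ncard < (Pset j).ncard :=
                hlt_of_ssub i j (fun he => hj he.symm) ((hx3 j).1 hxj)
              apply ih j
              have hss : Finset.univ.filter (fun l => (Pset j).ncard < (Pset l).ncard) ⊂
                  Finset.univ.filter (fun l => (Pset i).ncard < (Pset l).ncard) := by
                rw [Finset.ssubset_iff_of_subset (by
                  intro l hl
                  simp only [Finset.mem_filter, Finset.mem_univ, true_and] at hl ⊢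
                  omega)]
                exact ⟨j, Finset.mem_filter.2 ⟨Finset.mem_univ _, hlt⟩, by
                  simp only [Finset.mem_filter, Finset.mem_univ, true_and]
                  omega⟩
              have := Finset.card_lt_card hss
              omega
            · rw [if_neg hxj]
        simp only [hFdef] at hFx
        rw [Finset.sum_congr rfl (fun j _ => hterm j),
          Finset.sum_ite_eq' Finset.univ i (fun _ => n i)] at hFx
        simpa using hFx
    exact main _ i0 (Nat.lt_succ_self _)

end GW
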